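/- For every κ > 0 there exist h ∈ (0, π/2) and a function r : [−h,h] → ℝ which is twice continuously differentiable on [−h,h], such that: r(−h) = r(h) = 1; 0 < r(t) < 1 for all t ∈ (−h,h); r(−t) = r(t) for all t; r(0) = √(1+κ²) − κ; r satisfies 4·r(t)·r''(t) − 4·r'(t)² − (1 − r(t)⁴) = 0 on (−h,h); and (1−r(t)²)²/(4 r(t)²) + (r'(t)/r(t))² = κ² for all t ∈ (−h,h). -/

import Mathlib

open Set MeasureTheory intervalIntegral Filter Topology

namespace CatenoidAux

noncomputable def s0 (κ : ℝ) : ℝ := Real.sqrt (1 + κ ^ 2) - κ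
noncomputable def Fc (κ x : ℝ) : ℝ := κ ^ 2 * x ^ 2 - (1 - x ^ 2) ^ 2 / 4
noncomputable def Gc (κ x : ℝ) : ℝ := (Real.sqrt (Fc κ x))⁻¹
noncomputable def Tc (κ x : ℝ) : ℝ := ∫ u in s0 κ..x, Gc κ u
noncomputable def bc (κ : ℝ) : ℝ := (1 + (s0 κ)⁻¹) / 2

variable {κ : ℝ}

lemma sqrt_sq' (κ : ℝ) : Real.sqrt (1 + κ ^ 2) ^ 2 = 1 + κ ^ 2 :=
  Real.sq_sqrt (by positivity)

lemma s0_pos (hκ : 0 < κ) : 0 < s0 κ := by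
  have h := sqrt_sq' κ
  have h2 : κ < Real.sqrt (1 + κ ^ 2) := by
    nlinarith [Real.sqrt_nonneg (1 + κ ^ 2)]
  simp only [s0]; linarith

lemma s0_lt_one (hκ : 0 < κ) : s0 κ < 1 := by
  have h := sqrt_sq' κ
  have h2 : Real.sqrt (1 + κ ^ 2) < 1 + κ := by
    nlinarith [Real.sqrt_nonneg (1 + κ ^ 2)]
  simp only [s0]; linarith

lemma s0_rel (hκ : 0 < κ) : 1 - s0 κ ^ 2 = 2 * κ * s0 κ := by
  have h := sqrt_sq' κ
  simp only [s0]; nlinarith [h]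

lemma Ffact (hκ : 0 < κ) (x : ℝ) :
    Fc κ x = (x ^ 2 - s0 κ ^ 2) * (1 - s0 κ ^ 2 * x ^ 2) / (4 * s0 κ ^ 2) := by
  have h := s0_rel hκ
  have h0 : s0 κ ≠ 0 := (s0_pos hκ).ne'
  rw [eq_div_iff (by positivity)]
  simp only [Fc]
  linear_combination (-(x ^ 2) * ((1 - s0 κ ^ 2) + 2 * κ * s0 κ)) * h

lemma Fpos (hκ : 0 < κ) {x : ℝ} (hx1 : s0 κ < x) (hx2 : x < (s0 κ)⁻¹) :
    0 < Fc κ x := by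
  have hs := s0_pos hκ
  rw [Ffact hκ]
  have h1 : 0 < x ^ 2 - s0 κ ^ 2 := by nlinarith
  have h2 : s0 κ * x < 1 := by
    have h4 := (inv_pos.2 hs)
    calc s0 κ * x < s0 κ * (s0 κ)⁻¹ := by
          exact mul_lt_mul_of_pos_left hx2 hs
      _ = 1 := mul_inv_cancel₀ hs.ne'
  have h3 : 0 < 1 - s0 κ ^ 2 * x ^ 2 := by nlinarith [mul_pos hs (hs.trans hx1)]
  positivity

lemma one_lt_inv_s0 (hκ : 0 < κ) : 1 < (s0 κ)⁻¹ :=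
  (one_lt_inv₀ (s0_pos hκ)).2 (s0_lt_one hκ)

lemma one_lt_bc (hκ : 0 < κ) : 1 < bc κ := by
  have := one_lt_inv_s0 hκ; simp only [bc]; linarith

lemma bc_lt (hκ : 0 < κ) : bc κ < (s0 κ)⁻¹ := by
  have := one_lt_inv_s0 hκ; simp only [bc]; linarith

lemma Fcont : Continuous (Fc κ) := by unfold Fc; fun_prop

lemma Gnonneg (x : ℝ) : 0 ≤ Gc κ x := by unfold Gc; positivity

lemma Gpos {x : ℝ} (h : 0 < Fc κ x) : 0 < Gc κ x := by
  unfold Gc; exact inv_pos.2 (Real.sqrt_pos.2 h)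

lemma GcontAt {x : ℝ} (h : 0 < Fc κ x) : ContinuousAt (Gc κ) x := by
  refine ContinuousAt.inv₀ ?_ (Real.sqrt_pos.2 h).ne'
  exact (Real.continuous_sqrt.comp Fcont).continuousAt

lemma Gmeas : Measurable (Gc κ) := (Real.continuous_sqrt.comp Fcont).measurable.inv

lemma Gint (hκ : 0 < κ) {c : ℝ} (hc1 : s0 κ ≤ c) (hc2 : c < (s0 κ)⁻¹) :
    IntervalIntegrable (Gc κ) volume (s0 κ) c := by
  have hs := s0_pos hκ
  set m : ℝ := (1 - s0 κ ^ 2 * c ^ 2) / (2 * s0 κ) with hm_def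
  have hsc : s0 κ * c < 1 := by
    calc s0 κ * c < s0 κ * (s0 κ)⁻¹ := mul_lt_mul_of_pos_left hc2 hs
      _ = 1 := mul_inv_cancel₀ hs.ne'
  have hm : 0 < m := by
    apply div_pos _ (by positivity)
    nlinarith [mul_pos hs (hs.trans_le hc1)]
  have hFlb : ∀ x ∈ Ioc (s0 κ) c, m * (x - s0 κ) ≤ Fc κ x := by
    intro x hx
    rw [Ffact hκ, le_div_iff₀ (by positivity)]
    have hxs : s0 κ < x := hx.1
    have h4 : 0 ≤ x - s0 κ := by linarith
    have h1 : (x - s0 κ) * (2 * s0 κ) ≤ x ^ 2 - s0 κ ^ 2 := by nlinarith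
    have h2 : 1 - s0 κ ^ 2 * c ^ 2 ≤ 1 - s0 κ ^ 2 * x ^ 2 := by
      have hx0 : 0 < x := hs.trans hxs
      have hxc : x ^ 2 ≤ c ^ 2 := by nlinarith [hx.2]
      nlinarith [mul_le_mul_of_nonneg_left hxc (sq_nonneg (s0 κ))]
    have h3 : 0 ≤ 1 - s0 κ ^ 2 * c ^ 2 := by nlinarith [mul_pos hs (hs.trans_le hc1)]
    have key : (x - s0 κ) * (2 * s0 κ) * (1 - s0 κ ^ 2 * c ^ 2) ≤
        (x ^ 2 - s0 κ ^ 2) * (1 - s0 κ ^ 2 * x ^ 2) := by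
      calc (x - s0 κ) * (2 * s0 κ) * (1 - s0 κ ^ 2 * c ^ 2)
          ≤ (x ^ 2 - s0 κ ^ 2) * (1 - s0 κ ^ 2 * c ^ 2) := mul_le_mul_of_nonneg_right h1 h3
        _ ≤ (x ^ 2 - s0 κ ^ 2) * (1 - s0 κ ^ 2 * x ^ 2) :=
            mul_le_mul_of_nonneg_left h2 (by nlinarith)
    have heq : m * (x - s0 κ) * (4 * s0 κ ^ 2) =
        (x - s0 κ) * (2 * s0 κ) * (1 - s0 κ ^ 2 * c ^ 2) := by
      rw [hm_def]; field_simp; ring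
    linarith [key, heq.le, heq.ge]
  -- comparison function is integrable
  have hψ : IntervalIntegrable (fun x => m ^ (-(1/2) : ℝ) * (x - s0 κ) ^ (-(1/2) : ℝ))
      volume (s0 κ) c := by
    have h0 : IntervalIntegrable (fun x : ℝ => x ^ (-(1/2) : ℝ)) volume 0 (c - s0 κ) :=
      intervalIntegrable_rpow' (by norm_num)
    have h1 := (h0.comp_sub_right (s0 κ)).const_mul (m ^ (-(1/2) : ℝ))
    simpa using h1
  apply hψ.mono_fun' ((Gmeas.aestronglyMeasurable).restrict)
  rw [uIoc_of_le hc1]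
  refine (ae_restrict_mem measurableSet_Ioc).mono (fun x hx => ?_)
  have hFx : 0 < Fc κ x := Fpos hκ hx.1 (lt_of_le_of_lt hx.2 hc2)
  have hxs : 0 < x - s0 κ := by linarith [hx.1]
  have hb : Gc κ x ≤ m ^ (-(1/2) : ℝ) * (x - s0 κ) ^ (-(1/2) : ℝ) := by
    have hmm : 0 < m * (x - s0 κ) := mul_pos hm hxs
    have h5 : Real.sqrt (m * (x - s0 κ)) ≤ Real.sqrt (Fc κ x) :=
      Real.sqrt_le_sqrt (hFlb x hx)
    have h6 : Gc κ x ≤ (Real.sqrt (m * (x - s0 κ)))⁻¹ := by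
      unfold Gc
      exact inv_anti₀ (Real.sqrt_pos.2 hmm) h5
    refine h6.trans (le_of_eq ?_)
    rw [Real.sqrt_eq_rpow, Real.mul_rpow hm.le hxs.le, mul_inv,
      ← Real.rpow_neg hm.le, ← Real.rpow_neg hxs.le]
  simpa [abs_of_nonneg (Gnonneg (κ := κ) x)] using hb

lemma Gsmaf : StronglyMeasurableAtFilter (Gc κ) (nhds x) volume :=
  ⟨univ, univ_mem, (Gmeas.aestronglyMeasurable).restrict⟩

lemma ThasDeriv (hκ : 0 < κ) {x : ℝ} (hx1 : s0 κ < x) (hx2 : x < (s0 κ)⁻¹) :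
    HasDerivAt (Tc κ) (Gc κ x) x :=
  intervalIntegral.integral_hasDerivAt_right (Gint hκ hx1.le hx2) Gsmaf
    (GcontAt (Fpos hκ hx1 hx2))

lemma Tcont (hκ : 0 < κ) {c : ℝ} (hc1 : s0 κ ≤ c) (hc2 : c < (s0 κ)⁻¹) :
    ContinuousOn (Tc κ) (Icc (s0 κ) c) := by
  have h := intervalIntegral.continuousOn_primitive_interval'
    (μ := volume) (b₁ := s0 κ) (b₂ := c) (a := s0 κ) (f := Gc κ)
    (Gint hκ hc1 hc2) (by rw [uIcc_of_le hc1]; exact ⟨le_rfl, hc1⟩)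
  rwa [uIcc_of_le hc1] at h

lemma Tzero : Tc κ (s0 κ) = 0 := intervalIntegral.integral_same

lemma Tsub (hκ : 0 < κ) {x y : ℝ} (hx1 : s0 κ ≤ x) (hx2 : x < (s0 κ)⁻¹)
    (hy1 : s0 κ ≤ y) (hy2 : y < (s0 κ)⁻¹) :
    Tc κ y - Tc κ x = ∫ u in x..y, Gc κ u :=
  intervalIntegral.integral_interval_sub_left (Gint hκ hy1 hy2) (Gint hκ hx1 hx2)

lemma Tlt (hκ : 0 < κ) {x y : ℝ} (hx1 : s0 κ ≤ x) (hy2 : y < (s0 κ)⁻¹)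
    (hxy : x < y) : Tc κ x < Tc κ y := by
  have hy1 : s0 κ ≤ y := hx1.trans hxy.le
  have hx2 : x < (s0 κ)⁻¹ := hxy.trans hy2
  have hpos : 0 < ∫ u in x..y, Gc κ u := by
    apply intervalIntegral_pos_of_pos_on
    · refine (Gint hκ hy1 hy2).mono_set' ?_
      rw [uIoc_of_le hxy.le, uIoc_of_le hy1]
      exact Ioc_subset_Ioc hx1 le_rfl
    · intro u hu
      exact Gpos (Fpos hκ (lt_of_le_of_lt hx1 hu.1) (hu.2.trans hy2))
    · exact hxy
  have := Tsub hκ hx1 hx2 hy1 hy2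
  linarith

lemma TmonoIcc (hκ : 0 < κ) : StrictMonoOn (Tc κ) (Icc (s0 κ) (bc κ)) := by
  intro x hx y hy hxy
  exact Tlt hκ hx.1 (lt_of_le_of_lt hy.2 (bc_lt hκ)) hxy

noncomputable def hh (κ : ℝ) : ℝ := Tc κ 1
noncomputable def HH (κ : ℝ) : ℝ := Tc κ (bc κ)
noncomputable def rr (κ : ℝ) : ℝ → ℝ := Function.invFunOn (Tc κ) (Icc (s0 κ) (bc κ))

lemma one_mem_Icc (hκ : 0 < κ) : (1:ℝ) ∈ Icc (s0 κ) (bc κ) :=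
  ⟨(s0_lt_one hκ).le, (one_lt_bc hκ).le⟩

lemma s0_le_bc (hκ : 0 < κ) : s0 κ ≤ bc κ :=
  (s0_lt_one hκ).le.trans (one_lt_bc hκ).le

lemma hh_pos (hκ : 0 < κ) : 0 < hh κ := by
  have := Tlt hκ (le_refl (s0 κ)) (one_lt_inv_s0 hκ) (s0_lt_one hκ)
  rwa [Tzero] at this

lemma hh_lt_HH (hκ : 0 < κ) : hh κ < HH κ :=
  Tlt hκ (s0_lt_one hκ).le (bc_lt hκ) (one_lt_bc hκ)

lemma HH_pos (hκ : 0 < κ) : 0 < HH κ := (hh_pos hκ).trans (hh_lt_HH hκ)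

lemma Tmaps (hκ : 0 < κ) {x : ℝ} (hx : x ∈ Icc (s0 κ) (bc κ)) :
    Tc κ x ∈ Icc 0 (HH κ) := by
  constructor
  · rcases eq_or_lt_of_le hx.1 with h | h
    · rw [← h, Tzero]
    · have := Tlt hκ (le_refl (s0 κ)) (lt_of_le_of_lt hx.2 (bc_lt hκ)) h
      rw [Tzero] at this
      exact this.le
  · rcases eq_or_lt_of_le hx.2 with h | h
    · rw [h]; exact le_refl (HH κ)
    · exact (Tlt hκ hx.1 (bc_lt hκ) h).le

lemma Tsurj (hκ : 0 < κ) : SurjOn (Tc κ) (Icc (s0 κ) (bc κ)) (Icc 0 (HH κ)) := by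
  have h := intermediate_value_Icc (s0_le_bc hκ) (Tcont hκ (s0_le_bc hκ) (bc_lt hκ))
  rwa [Tzero] at h

lemma rr_mem (hκ : 0 < κ) {t : ℝ} (ht : t ∈ Icc 0 (HH κ)) :
    rr κ t ∈ Icc (s0 κ) (bc κ) :=
  Function.invFunOn_mem (Tsurj hκ ht)

lemma T_rr (hκ : 0 < κ) {t : ℝ} (ht : t ∈ Icc 0 (HH κ)) :
    Tc κ (rr κ t) = t :=
  Function.invFunOn_eq (Tsurj hκ ht)

lemma rr_T (hκ : 0 < κ) {x : ℝ} (hx : x ∈ Icc (s0 κ) (bc κ)) :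
    rr κ (Tc κ x) = x :=
  ((TmonoIcc hκ).injOn).leftInvOn_invFunOn hx

lemma rr_zero (hκ : 0 < κ) : rr κ 0 = s0 κ := by
  have := rr_T hκ (left_mem_Icc.2 (s0_le_bc hκ))
  rwa [Tzero] at this

lemma rr_hh (hκ : 0 < κ) : rr κ (hh κ) = 1 := rr_T hκ (one_mem_Icc hκ)

lemma rr_HH (hκ : 0 < κ) : rr κ (HH κ) = bc κ :=
  rr_T hκ (right_mem_Icc.2 (s0_le_bc hκ))

lemma rr_mono (hκ : 0 < κ) : StrictMonoOn (rr κ) (Icc 0 (HH κ)) := by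
  intro t1 h1 t2 h2 h12
  by_contra hcon
  push_neg at hcon
  have := (TmonoIcc hκ).monotoneOn (rr_mem hκ h2) (rr_mem hκ h1) hcon
  rw [T_rr hκ h1, T_rr hκ h2] at this
  exact absurd this (not_le.2 h12)

lemma rr_image (hκ : 0 < κ) : Icc (s0 κ) (bc κ) ⊆ rr κ '' (Icc 0 (HH κ)) := by
  intro x hx
  exact ⟨Tc κ x, Tmaps hκ hx, rr_T hκ hx⟩

lemma rr_contAt (hκ : 0 < κ) {t : ℝ} (ht : t ∈ Ioo 0 (HH κ)) :
    ContinuousAt (rr κ) t := by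
  apply (rr_mono hκ).continuousAt_of_image_mem_nhds (Icc_mem_nhds ht.1 ht.2)
  apply Filter.mem_of_superset _ (rr_image hκ)
  apply Icc_mem_nhds
  · rw [← rr_zero hκ]
    exact rr_mono hκ (left_mem_Icc.2 (HH_pos hκ).le) (Ioo_subset_Icc_self ht) ht.1
  · rw [← rr_HH hκ]
    exact rr_mono hκ (Ioo_subset_Icc_self ht) (right_mem_Icc.2 (HH_pos hκ).le) ht.2

lemma rr_contRight (hκ : 0 < κ) : ContinuousWithinAt (rr κ) (Ici 0) 0 := by
  apply (rr_mono hκ).continuousWithinAt_right_of_exists_between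
    (Icc_mem_nhdsGE_of_mem (by exact ⟨le_rfl, HH_pos hκ⟩))
  intro y hy
  rw [rr_zero hκ] at hy
  set x0 := min y (bc κ) with hx0
  have hx0s : s0 κ < x0 := lt_min hy ((s0_lt_one hκ).trans (one_lt_bc hκ))
  have hx0m : x0 ∈ Icc (s0 κ) (bc κ) := ⟨hx0s.le, min_le_right _ _⟩
  refine ⟨Tc κ x0, Tmaps hκ hx0m, ?_⟩
  rw [rr_T hκ hx0m, rr_zero hκ]
  exact ⟨hx0s, min_le_left _ _⟩

lemma rr_hasDeriv (hκ : 0 < κ) {t : ℝ} (ht : t ∈ Ioo 0 (HH κ)) :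
    HasDerivAt (rr κ) (Real.sqrt (Fc κ (rr κ t))) t := by
  have htm := Ioo_subset_Icc_self ht
  have h1 : s0 κ < rr κ t := by
    rw [← rr_zero hκ]
    exact rr_mono hκ (left_mem_Icc.2 (HH_pos hκ).le) htm ht.1
  have h2 : rr κ t < (s0 κ)⁻¹ := lt_of_le_of_lt (rr_mem hκ htm).2 (bc_lt hκ)
  have hF := Fpos hκ h1 h2
  have h := HasDerivAt.of_local_left_inverse (rr_contAt hκ ht)
    (ThasDeriv hκ h1 h2) (ne_of_gt (Gpos hF)) ?_
  · have : (Gc κ (rr κ t))⁻¹ = Real.sqrt (Fc κ (rr κ t)) := by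
      unfold Gc; rw [inv_inv]
    rwa [this] at h
  · filter_upwards [Ioo_mem_nhds ht.1 ht.2] with y hy
    exact T_rr hκ (Ioo_subset_Icc_self hy)

lemma Fzero (hκ : 0 < κ) : Fc κ (s0 κ) = 0 := by
  have h := s0_rel hκ
  simp only [Fc]
  nlinarith [h]

lemma FhasDeriv (x : ℝ) : HasDerivAt (Fc κ) (2 * κ ^ 2 * x + x * (1 - x ^ 2)) x := by
  have h1 : HasDerivAt (fun x : ℝ => κ ^ 2 * x ^ 2 - (1 - x ^ 2) ^ 2 / 4)
      (κ ^ 2 * (2 * x) - 2 * (1 - x ^ 2) * (0 - 2 * x) / 4) x := by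
    apply HasDerivAt.sub
    · exact ((hasDerivAt_pow 2 x).const_mul (κ ^ 2)).congr_deriv (by ring)
    · have h2 : HasDerivAt (fun x : ℝ => 1 - x ^ 2) (0 - 2 * x) x := by
        simpa using (hasDerivAt_pow 2 x).const_sub 1
      simpa using (h2.pow 2).div_const 4
  refine h1.congr_deriv (by ring)

/-- MVT-based limit lemma: one-sided derivative at a left endpoint. -/
lemma hasDerivWithinAt_Ici_of_tendsto {f g : ℝ → ℝ} {a b L : ℝ} (hab : a < b)
    (hfc : ContinuousOn f (Icc a b))
    (hd : ∀ x ∈ Ioo a b, HasDerivAt f (g x) x)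
    (hg : Tendsto g (𝓝[>] a) (𝓝 L)) :
    HasDerivWithinAt f L (Ici a) a := by
  rw [hasDerivWithinAt_iff_tendsto_slope, Ici_sdiff_left]
  rw [Metric.tendsto_nhdsWithin_nhds] at hg ⊢
  intro ε hε
  obtain ⟨δ, hδ, hgδ⟩ := hg ε hε
  refine ⟨min δ (b - a), lt_min hδ (by linarith), fun {x} hx hxd => ?_⟩
  have hax : a < x := hx
  have hdist : |x - a| < min δ (b - a) := by rwa [Real.dist_eq] at hxd
  have hxb : x ≤ b := by
    have h1 := (abs_lt.1 hdist).2
    have h2 := min_le_right δ (b - a)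
    linarith
  obtain ⟨c, hc, hceq⟩ := exists_hasDerivAt_eq_slope f g hax
    (hfc.mono (Icc_subset_Icc le_rfl hxb))
    (fun y hy => hd y ⟨hy.1, lt_of_lt_of_le hy.2 hxb⟩)
  have hslope : slope f a x = g c := by rw [slope_def_field]; exact hceq.symm
  rw [hslope]
  apply hgδ hc.1
  rw [Real.dist_eq, abs_of_pos (by linarith [hc.1] : (0:ℝ) < c - a)]
  have h1 := (abs_lt.1 hdist).2
  have h2 := min_le_left δ (b - a)
  linarith [hc.2]

/-- Reflection: derivative of `f` at `0` from the left, from the right-derivative of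
`t ↦ f (-t)`. -/
lemma hasDerivWithinAt_Iic_reflect {f : ℝ → ℝ} {L : ℝ}
    (h : HasDerivWithinAt (fun t => f (-t)) L (Ici 0) 0) :
    HasDerivWithinAt f (-L) (Iic 0) 0 := by
  have hneg : HasDerivWithinAt (fun t : ℝ => -t) (-1) (Iic 0) 0 :=
    (hasDerivAt_neg (0:ℝ)).hasDerivWithinAt
  have hmaps : MapsTo (fun t : ℝ => -t) (Iic 0) (Ici 0) := fun t ht => by
    simpa using ht
  have h0 : HasDerivWithinAt (fun t => f (-t)) L (Ici 0) ((fun t : ℝ => -t) 0) := by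
    simpa using h
  have hcomp := HasDerivWithinAt.comp (0:ℝ) h0 hneg hmaps
  have heq : ((fun t => f (-t)) ∘ fun t : ℝ => -t) = f := by
    funext t; simp
  rw [heq] at hcomp
  simpa [mul_comm] using hcomp

noncomputable def pr (κ t : ℝ) : ℝ := rr κ |t|
noncomputable def pr' (κ t : ℝ) : ℝ :=
  if t < 0 then -Real.sqrt (Fc κ (pr κ t)) else Real.sqrt (Fc κ (pr κ t))
noncomputable def pr'' (κ t : ℝ) : ℝ := κ ^ 2 * pr κ t + pr κ t * (1 - (pr κ t) ^ 2) / 2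

lemma pr_even (t : ℝ) : pr κ (-t) = pr κ t := by simp [pr]

lemma pr_zero (hκ : 0 < κ) : pr κ 0 = s0 κ := by
  simp only [pr, abs_zero]; exact rr_zero hκ

lemma pr'_zero (hκ : 0 < κ) : pr' κ 0 = 0 := by
  simp only [pr', if_neg (lt_irrefl (0:ℝ))]
  rw [pr_zero hκ, Fzero hκ, Real.sqrt_zero]

lemma pr'_odd (hκ : 0 < κ) (t : ℝ) : pr' κ (-t) = -pr' κ t := by
  rcases lt_trichotomy t 0 with h | h | h
  · rw [pr', pr', if_neg (by linarith), if_pos h, pr_even, neg_neg]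
  · rw [h, neg_zero, pr'_zero hκ, neg_zero]
  · rw [pr', pr', if_pos (by linarith), if_neg (not_lt.2 h.le), pr_even]

lemma pr_mem (hκ : 0 < κ) {t : ℝ} (ht : t ∈ Ioc 0 (hh κ)) :
    pr κ t ∈ Ioc (s0 κ) 1 := by
  have h1 : |t| = t := abs_of_pos ht.1
  have htI : t ∈ Icc 0 (HH κ) := ⟨ht.1.le, ht.2.trans (hh_lt_HH hκ).le⟩
  constructor
  · rw [pr, h1, ← rr_zero hκ]
    exact rr_mono hκ (left_mem_Icc.2 (HH_pos hκ).le) htI ht.1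
  · rw [pr, h1, ← rr_hh hκ]
    rcases eq_or_lt_of_le ht.2 with h | h
    · rw [h]
    · exact le_of_lt (rr_mono hκ htI ⟨(hh_pos hκ).le, (hh_lt_HH hκ).le⟩ h)

lemma Fpos_pr (hκ : 0 < κ) {t : ℝ} (ht : t ∈ Ioc 0 (hh κ)) : 0 < Fc κ (pr κ t) := by
  have h := pr_mem hκ ht
  exact Fpos hκ h.1 (lt_of_le_of_lt h.2 (one_lt_inv_s0 hκ))

lemma pr_hasDerivAt_pos (hκ : 0 < κ) {t : ℝ} (ht : t ∈ Ioc 0 (hh κ)) :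
    HasDerivAt (pr κ) (Real.sqrt (Fc κ (pr κ t))) t := by
  have htI : t ∈ Ioo 0 (HH κ) := ⟨ht.1, lt_of_le_of_lt ht.2 (hh_lt_HH hκ)⟩
  have h := rr_hasDeriv hκ htI
  have heq : pr κ =ᶠ[nhds t] rr κ := by
    filter_upwards [Ioi_mem_nhds ht.1] with y hy
    simp [pr, abs_of_pos (mem_Ioi.1 hy)]
  have hval : pr κ t = rr κ t := by simp [pr, abs_of_pos ht.1]
  rw [hval]
  exact h.congr_of_eventuallyEq heq

lemma pr'_hasDerivAt_pos (hκ : 0 < κ) {t : ℝ} (ht : t ∈ Ioc 0 (hh κ)) :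
    HasDerivAt (pr' κ) (pr'' κ t) t := by
  have hF := Fpos_pr hκ ht
  have hsq : HasDerivAt Real.sqrt (1 / (2 * Real.sqrt (Fc κ (pr κ t)))) (Fc κ (pr κ t)) :=
    Real.hasDerivAt_sqrt hF.ne'
  have hFp := (FhasDeriv (κ := κ) (pr κ t)).comp t (pr_hasDerivAt_pos hκ ht)
  have hcomp := hsq.comp t hFp
  have heq : pr' κ =ᶠ[nhds t] fun y => Real.sqrt (Fc κ (pr κ y)) := by
    filter_upwards [Ioi_mem_nhds ht.1] with y hy
    simp [pr', not_lt.2 (le_of_lt (mem_Ioi.1 hy))]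
  refine HasDerivAt.congr_of_eventuallyEq ?_ heq
  have hs : Real.sqrt (Fc κ (pr κ t)) ≠ 0 := (Real.sqrt_pos.2 hF).ne'
  convert hcomp using 1
  · rfl
  · rfl
  simp only [pr'']
  field_simp

lemma pr_contOn (hκ : 0 < κ) : ContinuousOn (pr κ) (Icc 0 (hh κ)) := by
  have hrr : ContinuousOn (rr κ) (Icc 0 (hh κ)) := by
    intro t ht
    rcases eq_or_lt_of_le ht.1 with h | h
    · rw [← h]
      exact (rr_contRight hκ).mono (fun y hy => hy.1)
    · exact ((rr_contAt hκ ⟨h, lt_of_le_of_lt ht.2 (hh_lt_HH hκ)⟩).continuousWithinAt)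
  refine ContinuousOn.congr hrr ?_
  intro t ht
  simp [pr, abs_of_nonneg ht.1]

lemma pr'_contOn_right (hκ : 0 < κ) : ContinuousOn (pr' κ) (Icc 0 (hh κ)) := by
  have h : ContinuousOn (fun y => Real.sqrt (Fc κ (pr κ y))) (Icc 0 (hh κ)) :=
    (Real.continuous_sqrt.comp Fcont).comp_continuousOn (pr_contOn hκ)
  refine ContinuousOn.congr h ?_
  intro t ht
  simp [pr', not_lt.2 ht.1]

lemma pr''_contOn_right (hκ : 0 < κ) :
    ContinuousOn (fun y => pr'' κ y) (Icc 0 (hh κ)) := by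
  have hc : Continuous fun x : ℝ => κ ^ 2 * x + x * (1 - x ^ 2) / 2 := by fun_prop
  exact hc.comp_continuousOn (pr_contOn hκ)

lemma tendsto_within_zero_aux (hκ : 0 < κ) {φ : ℝ → ℝ} {l : ℝ}
    (h : ContinuousWithinAt φ (Icc 0 (hh κ)) 0) (hval : φ 0 = l) :
    Tendsto φ (𝓝[>] (0:ℝ)) (nhds l) := by
  have h1 : Tendsto φ (𝓝[Icc 0 (hh κ)] (0:ℝ)) (nhds l) := by
    rw [← hval]; exact h.tendsto
  have h2 : 𝓝[>] (0:ℝ) = 𝓝[Ioo 0 (hh κ)] (0:ℝ) :=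
    (nhdsWithin_Ioo_eq_nhdsGT (hh_pos hκ)).symm
  rw [h2]
  exact h1.mono_left (nhdsWithin_mono 0 Ioo_subset_Icc_self)

lemma pr_hasDerivWithinAt_zero (hκ : 0 < κ) :
    HasDerivWithinAt (pr κ) 0 (Ici 0) 0 := by
  apply hasDerivWithinAt_Ici_of_tendsto (hh_pos hκ) (pr_contOn hκ)
    (fun x hx => pr_hasDerivAt_pos hκ (Ioo_subset_Ioc_self hx))
  have h : Tendsto (fun y => Real.sqrt (Fc κ (pr κ y))) (𝓝[>] (0:ℝ)) (nhds 0) := by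
    apply tendsto_within_zero_aux hκ
    · exact (Real.continuous_sqrt.comp Fcont).continuousAt.comp_continuousWithinAt
        ((pr_contOn hκ) 0 (left_mem_Icc.2 (hh_pos hκ).le))
    · rw [pr_zero hκ, Fzero hκ, Real.sqrt_zero]
  exact h

lemma pr_hasDerivWithinAt_zero' (hκ : 0 < κ) :
    HasDerivWithinAt (pr κ) (pr' κ 0) (Icc (-(hh κ)) (hh κ)) 0 := by
  rw [pr'_zero hκ]
  have h1 := pr_hasDerivWithinAt_zero hκ
  have h2 : HasDerivWithinAt (pr κ) (-0 : ℝ) (Iic 0) 0 := by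
    apply hasDerivWithinAt_Iic_reflect
    have : (fun t => pr κ (-t)) = pr κ := by funext t; exact pr_even t
    rw [this]; exact h1
  rw [neg_zero] at h2
  exact (h1.union h2).mono (fun y _ => by rcases le_total 0 y with h | h; exacts [Or.inl h, Or.inr h])

lemma pr'_hasDerivWithinAt_zero (hκ : 0 < κ) :
    HasDerivWithinAt (pr' κ) (pr'' κ 0) (Icc (-(hh κ)) (hh κ)) 0 := by
  have h1 : HasDerivWithinAt (pr' κ) (pr'' κ 0) (Ici 0) 0 := by
    apply hasDerivWithinAt_Ici_of_tendsto (hh_pos hκ) (pr'_contOn_right hκ)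
      (fun x hx => pr'_hasDerivAt_pos hκ (Ioo_subset_Ioc_self hx))
    exact tendsto_within_zero_aux hκ
      ((pr''_contOn_right hκ) 0 (left_mem_Icc.2 (hh_pos hκ).le)) rfl
  have h2 : HasDerivWithinAt (pr' κ) (pr'' κ 0) (Iic 0) 0 := by
    have href : HasDerivWithinAt (fun t => pr' κ (-t)) (-(pr'' κ 0)) (Ici 0) 0 := by
      have : (fun t => pr' κ (-t)) = fun t => -(pr' κ t) := by
        funext t; exact pr'_odd hκ t
      rw [this]
      exact h1.neg
    have := hasDerivWithinAt_Iic_reflect href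
    rwa [neg_neg] at this
  exact (h1.union h2).mono (fun y _ => by rcases le_total 0 y with h | h; exacts [Or.inl h, Or.inr h])

lemma pr''_even (t : ℝ) : pr'' κ (-t) = pr'' κ t := by simp [pr'', pr_even]

lemma pr_hasDerivWithinAt (hκ : 0 < κ) {t : ℝ} (ht : t ∈ Icc (-(hh κ)) (hh κ)) :
    HasDerivWithinAt (pr κ) (pr' κ t) (Icc (-(hh κ)) (hh κ)) t := by
  rcases lt_trichotomy t 0 with h | h | h
  · have hmem : -t ∈ Ioc 0 (hh κ) := ⟨by linarith, by linarith [ht.1]⟩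
    have hd := pr_hasDerivAt_pos hκ hmem
    have hcomp := hd.comp t (hasDerivAt_neg t)
    have heq : (pr κ ∘ fun x : ℝ => -x) = pr κ := by
      funext y; exact pr_even y
    rw [heq] at hcomp
    have hval : pr' κ t = Real.sqrt (Fc κ (pr κ (-t))) * (-1) := by
      rw [pr', if_pos h, pr_even]; ring
    rw [hval]
    exact hcomp.hasDerivWithinAt
  · rw [h] at ht ⊢
    exact pr_hasDerivWithinAt_zero' hκ
  · have hval : pr' κ t = Real.sqrt (Fc κ (pr κ t)) := by rw [pr', if_neg (not_lt.2 h.le)]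
    rw [hval]
    exact (pr_hasDerivAt_pos hκ ⟨h, ht.2⟩).hasDerivWithinAt

lemma pr'_hasDerivWithinAt (hκ : 0 < κ) {t : ℝ} (ht : t ∈ Icc (-(hh κ)) (hh κ)) :
    HasDerivWithinAt (pr' κ) (pr'' κ t) (Icc (-(hh κ)) (hh κ)) t := by
  rcases lt_trichotomy t 0 with h | h | h
  · have hmem : -t ∈ Ioc 0 (hh κ) := ⟨by linarith, by linarith [ht.1]⟩
    have hd := pr'_hasDerivAt_pos hκ hmem
    have hcomp := hd.comp t (hasDerivAt_neg t)
    have heq : (pr' κ ∘ fun x : ℝ => -x) = fun y => -(pr' κ y) := by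
      funext y; exact pr'_odd hκ y
    rw [heq] at hcomp
    have := hcomp.neg
    simp only [neg_neg, Pi.neg_def] at this
    have hval : pr'' κ t = -(pr'' κ (-t) * (-1)) := by rw [pr''_even]; ring
    rw [hval]
    exact this.hasDerivWithinAt
  · rw [h] at ht ⊢
    exact pr'_hasDerivWithinAt_zero hκ
  · exact (pr'_hasDerivAt_pos hκ ⟨h, ht.2⟩).hasDerivWithinAt

lemma pr_contOn_full (hκ : 0 < κ) : ContinuousOn (pr κ) (Icc (-(hh κ)) (hh κ)) :=
  fun _ ht => (pr_hasDerivWithinAt hκ ht).continuousWithinAt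

lemma pr''_contOn (hκ : 0 < κ) : ContinuousOn (pr'' κ) (Icc (-(hh κ)) (hh κ)) := by
  have hc : Continuous fun x : ℝ => κ ^ 2 * x + x * (1 - x ^ 2) / 2 := by fun_prop
  exact hc.comp_continuousOn (pr_contOn_full hκ)

lemma pr'_sq (hκ : 0 < κ) {t : ℝ} (ht : t ∈ Ioo (-(hh κ)) (hh κ)) :
    (pr' κ t) ^ 2 = Fc κ (pr κ t) := by
  have hF : 0 ≤ Fc κ (pr κ t) := by
    rcases lt_trichotomy t 0 with h | h | h
    · have := Fpos_pr hκ (⟨by linarith, by linarith [ht.1]⟩ : -t ∈ Ioc 0 (hh κ))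
      rw [pr_even] at this
      exact this.le
    · rw [h, pr_zero hκ, Fzero hκ]
    · exact (Fpos_pr hκ ⟨h, ht.2.le⟩).le
  rw [pr']
  split
  · rw [neg_sq, Real.sq_sqrt hF]
  · rw [Real.sq_sqrt hF]

lemma s0_mul (hκ : 0 < κ) : (κ + Real.sqrt (1 + κ ^ 2)) * s0 κ = 1 := by
  have h := sqrt_sq' κ
  simp only [s0]
  nlinarith [h]

lemma s0_eq_exp (hκ : 0 < κ) : s0 κ = Real.exp (-(Real.arsinh κ)) := by
  rw [Real.exp_neg, Real.exp_arsinh]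
  exact eq_inv_of_mul_eq_one_left (by linarith [s0_mul hκ])

lemma log_s0 (hκ : 0 < κ) : Real.log (s0 κ) = -(Real.arsinh κ) := by
  rw [s0_eq_exp hκ, Real.log_exp]

lemma arsinh_pos (hκ : 0 < κ) : 0 < Real.arsinh κ := Real.arsinh_pos_iff.2 hκ

lemma arsinh_lt (hκ : 0 < κ) : Real.arsinh κ < κ := by
  have h := Real.self_lt_sinh_iff.2 (arsinh_pos hκ)
  rwa [Real.sinh_arsinh] at h

lemma sinh_cvx : ConvexOn ℝ (Ici (0:ℝ)) Real.sinh := by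
  apply convexOn_of_hasDerivWithinAt2_nonneg (convex_Ici 0)
    Real.continuous_sinh.continuousOn
    (f' := Real.cosh) (f'' := Real.sinh)
    (fun x _ => (Real.hasDerivAt_sinh x).hasDerivWithinAt)
    (fun x _ => (Real.hasDerivAt_cosh x).hasDerivWithinAt)
  intro x hx
  rw [interior_Ici] at hx
  exact (Real.sinh_pos_iff.2 hx).le

lemma sinh_chord (hκ : 0 < κ) {y : ℝ} (hy0 : 0 ≤ y) (hya : y ≤ Real.arsinh κ) :
    Real.sinh y ≤ y / Real.arsinh κ * κ := by
  set a := Real.arsinh κ with ha_def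
  have ha : 0 < a := arsinh_pos hκ
  have h := sinh_cvx.2 (mem_Ici.2 (le_refl (0:ℝ))) (mem_Ici.2 ha.le)
    (show (0:ℝ) ≤ 1 - y / a by rw [sub_nonneg]; exact div_le_one_of_le₀ hya ha.le)
    (show (0:ℝ) ≤ y / a by positivity)
    (show (1 - y / a) + y / a = 1 by ring)
  have harg : (1 - y / a) • (0:ℝ) + (y / a) • a = y := by
    rw [smul_eq_mul, smul_eq_mul, mul_zero, zero_add, div_mul_cancel₀ _ ha.ne']
  rw [harg] at h
  have : Real.sinh y ≤ (1 - y / a) * Real.sinh 0 + y / a * Real.sinh a := h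
  rw [Real.sinh_zero, ha_def, Real.sinh_arsinh] at this
  linarith

lemma hh_le (hκ : 0 < κ) : hh κ ≤ Real.arsinh κ / κ * (Real.pi / 2) := by
  set a := Real.arsinh κ with ha_def
  have ha : 0 < a := arsinh_pos hκ
  have hs := s0_pos hκ
  have hs1 := s0_lt_one hκ
  have hlogs0 : Real.log (s0 κ) = -a := log_s0 hκ
  set B : ℝ → ℝ := fun x => a / κ * (Real.pi / 2 - Real.arcsin (Real.log x / Real.log (s0 κ)))
    with hB_def
  set φ : ℝ → ℝ := fun x => B x - Tc κ x with hφ_def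
  have hderiv : ∀ x ∈ Ioo (s0 κ) 1, HasDerivAt φ
      (a / κ * -(1 / Real.sqrt (1 - (Real.log x / Real.log (s0 κ)) ^ 2) *
        (x⁻¹ / Real.log (s0 κ))) - Gc κ x) x := by
    intro x hx
    have hx0 : 0 < x := hs.trans hx.1
    have hlx1 : Real.log x < 0 := Real.log_neg hx0 hx.2
    have hlx2 : -a < Real.log x := by
      have := Real.log_lt_log hs hx.1
      rwa [hlogs0] at this
    have hqy : Real.log x / Real.log (s0 κ) = -Real.log x / a := by
      rw [hlogs0, div_neg, neg_div]
    have hq0 : 0 < Real.log x / Real.log (s0 κ) := by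
      rw [hqy]; exact div_pos (by linarith) ha
    have hq1 : Real.log x / Real.log (s0 κ) < 1 := by
      rw [hqy, div_lt_one ha]; linarith
    have harc := Real.hasDerivAt_arcsin
      (x := Real.log x / Real.log (s0 κ)) (by linarith) (by linarith)
    have hdiv : HasDerivAt (fun z => Real.log z / Real.log (s0 κ))
        (x⁻¹ / Real.log (s0 κ)) x := (Real.hasDerivAt_log hx0.ne').div_const _
    have hcomp := harc.comp x hdiv
    have hB : HasDerivAt B
        (a / κ * -(1 / Real.sqrt (1 - (Real.log x / Real.log (s0 κ)) ^ 2) *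
          (x⁻¹ / Real.log (s0 κ)))) x := by
      have h5 := (hcomp.const_sub (Real.pi / 2)).const_mul (a / κ)
      simp only [Function.comp] at h5
      rw [hB_def]
      exact h5
    exact hB.sub (ThasDeriv hκ hx.1 (hx.2.trans (one_lt_inv_s0 hκ)))
  have hcont : ContinuousOn φ (Icc (s0 κ) 1) := by
    have hlogc : ContinuousOn (fun x => Real.log x / Real.log (s0 κ)) (Icc (s0 κ) 1) := by
      apply ContinuousOn.div_const
      apply Real.continuousOn_log.mono
      intro x hx
      exact mem_compl_singleton_iff.2 (ne_of_gt (hs.trans_le hx.1))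
    have hBc : ContinuousOn B (Icc (s0 κ) 1) := by
      rw [hB_def]
      exact continuousOn_const.mul
        (continuousOn_const.sub (Real.continuous_arcsin.comp_continuousOn hlogc))
    exact hBc.sub (Tcont hκ hs1.le (one_lt_inv_s0 hκ))
  have hmono : MonotoneOn φ (Icc (s0 κ) 1) := by
    apply monotoneOn_of_deriv_nonneg (convex_Icc _ _) hcont
    · rw [interior_Icc]
      exact fun x hx => (hderiv x hx).differentiableAt.differentiableWithinAt
    · rw [interior_Icc]
      intro x hx
      rw [(hderiv x hx).deriv]
      -- the pointwise comparison
      have hx0 : 0 < x := hs.trans hx.1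
      have hlx1 : Real.log x < 0 := Real.log_neg hx0 hx.2
      have hlx2 : -a < Real.log x := by
        have := Real.log_lt_log hs hx.1
        rwa [hlogs0] at this
      set q := Real.log x / Real.log (s0 κ) with hq_def
      have hqy : q = -Real.log x / a := by rw [hq_def, hlogs0, div_neg, neg_div]
      have hq0 : 0 < q := by rw [hqy]; apply div_pos (by linarith) ha
      have hq1 : q < 1 := by rw [hqy]; rw [div_lt_one ha]; linarith
      have hq2 : 0 < 1 - q ^ 2 := by nlinarith
      have hsq2 : 0 < Real.sqrt (1 - q ^ 2) := Real.sqrt_pos.2 hq2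
      -- sinh comparison
      have hy0 : (0:ℝ) ≤ -Real.log x := by linarith
      have hya : -Real.log x ≤ a := by linarith
      have hchord := sinh_chord hκ hy0 hya
      have hsinh : Real.sinh (-Real.log x) = (1 - x ^ 2) / (2 * x) := by
        rw [Real.sinh_neg, Real.sinh_log hx0]
        field_simp
        ring
      have h1 : (1 - x ^ 2) / (2 * x) ≤ q * κ := by
        rw [← hsinh]
        calc Real.sinh (-Real.log x) ≤ -Real.log x / a * κ := hchord
          _ = q * κ := by rw [hqy]
      have h0 : 0 ≤ (1 - x ^ 2) / (2 * x) := by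
        rw [← hsinh]
        rw [← Real.sinh_zero]
        exact Real.sinh_le_sinh.2 hy0
      have hkey : (1 - x ^ 2) ^ 2 / 4 ≤ κ ^ 2 * x ^ 2 * q ^ 2 := by
        have h2 := mul_le_mul_of_nonneg_right (mul_self_le_mul_self h0 h1) (sq_nonneg x)
        have h3 : (1 - x ^ 2) / (2 * x) * ((1 - x ^ 2) / (2 * x)) * x ^ 2
            = (1 - x ^ 2) ^ 2 / 4 := by field_simp; ring
        have h4 : q * κ * (q * κ) * x ^ 2 = κ ^ 2 * x ^ 2 * q ^ 2 := by ring
        linarith [h2, h3.le, h3.ge, h4.le, h4.ge]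
      have hFge : κ ^ 2 * x ^ 2 * (1 - q ^ 2) ≤ Fc κ x := by
        have hid : Fc κ x - κ ^ 2 * x ^ 2 * (1 - q ^ 2)
            = κ ^ 2 * x ^ 2 * q ^ 2 - (1 - x ^ 2) ^ 2 / 4 := by
          simp only [Fc]; ring
        linarith
      have hsqrtle : κ * x * Real.sqrt (1 - q ^ 2) ≤ Real.sqrt (Fc κ x) := by
        have h3 : Real.sqrt (κ ^ 2 * x ^ 2 * (1 - q ^ 2)) ≤ Real.sqrt (Fc κ x) :=
          Real.sqrt_le_sqrt hFge
        have h4 : Real.sqrt (κ ^ 2 * x ^ 2 * (1 - q ^ 2)) = κ * x * Real.sqrt (1 - q ^ 2) := by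
          rw [show κ ^ 2 * x ^ 2 * (1 - q ^ 2) = (κ * x) ^ 2 * (1 - q ^ 2) by ring,
            Real.sqrt_mul (sq_nonneg _), Real.sqrt_sq (by positivity)]
        linarith
      have hGle : Gc κ x ≤ (κ * x * Real.sqrt (1 - q ^ 2))⁻¹ := by
        unfold Gc
        exact inv_anti₀ (by positivity) hsqrtle
      have hDB : a / κ * -(1 / Real.sqrt (1 - q ^ 2) * (x⁻¹ / Real.log (s0 κ)))
          = (κ * x * Real.sqrt (1 - q ^ 2))⁻¹ := by
        rw [hlogs0]
        field_simp
      rw [hDB]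
      linarith
  have h01 := hmono (left_mem_Icc.2 hs1.le) (right_mem_Icc.2 hs1.le) hs1.le
  have hBs0 : B (s0 κ) = 0 := by
    rw [hB_def]
    have hne : Real.log (s0 κ) ≠ 0 := by rw [hlogs0]; exact neg_ne_zero.2 ha.ne'
    simp only [div_self hne, Real.arcsin_one]
    ring
  have hB1 : B 1 = a / κ * (Real.pi / 2) := by
    rw [hB_def]
    simp [Real.arcsin_zero]
  have hTs0 : Tc κ (s0 κ) = 0 := Tzero
  simp only [hφ_def] at h01
  rw [hBs0, hTs0, hB1] at h01
  simp only [sub_zero] at h01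
  have : hh κ = Tc κ 1 := rfl
  linarith

lemma hh_lt_pi (hκ : 0 < κ) : hh κ < Real.pi / 2 := by
  refine lt_of_le_of_lt (hh_le hκ) ?_
  have h1 : Real.arsinh κ / κ < 1 := (div_lt_one hκ).2 (arsinh_lt hκ)
  have h2 : 0 < Real.pi / 2 := by positivity
  calc Real.arsinh κ / κ * (Real.pi / 2) < 1 * (Real.pi / 2) :=
        mul_lt_mul_of_pos_right h1 h2
    _ = Real.pi / 2 := one_mul _

lemma pr_hh (hκ : 0 < κ) : pr κ (hh κ) = 1 := by
  rw [pr, abs_of_pos (hh_pos hκ)]; exact rr_hh hκ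

lemma pr_neg_hh (hκ : 0 < κ) : pr κ (-(hh κ)) = 1 := by
  rw [pr_even]; exact pr_hh hκ

lemma pr_range (hκ : 0 < κ) {t : ℝ} (ht : t ∈ Ioo (-(hh κ)) (hh κ)) :
    0 < pr κ t ∧ pr κ t < 1 := by
  have habs : |t| < hh κ := abs_lt.2 ⟨ht.1, ht.2⟩
  have habs0 : (0:ℝ) ≤ |t| := abs_nonneg t
  have hmem1 : |t| ∈ Icc 0 (HH κ) := ⟨habs0, habs.le.trans (hh_lt_HH hκ).le⟩
  have hmem2 : hh κ ∈ Icc 0 (HH κ) := ⟨(hh_pos hκ).le, (hh_lt_HH hκ).le⟩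
  constructor
  · have := (rr_mem hκ hmem1).1
    have hs := s0_pos hκ
    rw [pr]; linarith
  · have h := rr_mono hκ hmem1 hmem2 habs
    rw [rr_hh hκ] at h
    exact h

end CatenoidAux

open CatenoidAux in
/-- Existence of the vertical catenoid profile with flux parameter κ > 0:
a profile `r` on `[-h,h]` with `h ∈ (0, π/2)`, symmetric, with boundary value 1,
neck radius `√(1+κ²) − κ`, satisfying the catenoid ODE and its first integral. -/
theorem catenoid_profile_exists (κ : ℝ) (hκ : 0 < κ) :
    ∃ h : ℝ, 0 < h ∧ h < Real.pi / 2 ∧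
    ∃ r r' r'' : ℝ → ℝ,
      (∀ t ∈ Set.Icc (-h) h, HasDerivWithinAt r (r' t) (Set.Icc (-h) h) t) ∧
      (∀ t ∈ Set.Icc (-h) h, HasDerivWithinAt r' (r'' t) (Set.Icc (-h) h) t) ∧
      ContinuousOn r'' (Set.Icc (-h) h) ∧
      r (-h) = 1 ∧ r h = 1 ∧
      (∀ t ∈ Set.Ioo (-h) h, 0 < r t ∧ r t < 1) ∧
      (∀ t ∈ Set.Icc (-h) h, r (-t) = r t) ∧
      r 0 = Real.sqrt (1 + κ ^ 2) - κ ∧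
      (∀ t ∈ Set.Ioo (-h) h,
        4 * r t * r'' t - 4 * (r' t) ^ 2 - (1 - (r t) ^ 4) = 0) ∧
      (∀ t ∈ Set.Ioo (-h) h,
        (1 - (r t) ^ 2) ^ 2 / (4 * (r t) ^ 2) + (r' t / r t) ^ 2 = κ ^ 2) := by
  refine ⟨hh κ, hh_pos hκ, hh_lt_pi hκ, pr κ, pr' κ, pr'' κ,
    fun t ht => pr_hasDerivWithinAt hκ ht,
    fun t ht => pr'_hasDerivWithinAt hκ ht,
    pr''_contOn hκ,
    pr_neg_hh hκ, pr_hh hκ,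
    fun t ht => pr_range hκ ht,
    fun t _ => pr_even t,
    pr_zero hκ,
    fun t ht => ?_, fun t ht => ?_⟩
  · have hsq := pr'_sq hκ ht
    rw [hsq]
    simp only [pr'', Fc]
    ring
  · have hsq := pr'_sq hκ ht
    have hr0 : 0 < pr κ t := (pr_range hκ ht).1
    rw [div_pow, hsq]
    simp only [Fc]
    field_simp
    ring
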